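/- Let G be a linearly ordered abelian group with non-negative cone G⁺. The map M ↦ M ∩ (−M) is a bijection from the set of submonoids M with G⁺ ⊆ M ⊆ G to the set of convex subgroups H of G; the inverse sends H to G⁺ ∪ H. -/

import Mathlib

/-- An intermediate monoid `G⁺ ⊆ M ⊆ G`, as a set. -/
def IsIntermediateMonoid {G : Type*} [AddCommGroup G] [LinearOrder G] [IsOrderedAddMonoid G] (M : Set G) : Prop :=
  (0 : G) ∈ M ∧ (∀ a ∈ M, ∀ b ∈ M, a + b ∈ M) ∧ {g : G | 0 ≤ g} ⊆ M

/-- A convex subgroup, as a set. -/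
def IsConvexSubgroupSet {G : Type*} [AddCommGroup G] [LinearOrder G] [IsOrderedAddMonoid G] (H : Set G) : Prop :=
  (0 : G) ∈ H ∧ (∀ x ∈ H, ∀ y ∈ H, x + y ∈ H) ∧ (∀ x ∈ H, -x ∈ H) ∧
    (∀ x h : G, h ∈ H → 0 ≤ x → x ≤ h → x ∈ H)

lemma aux_maps {G : Type*} [AddCommGroup G] [LinearOrder G] [IsOrderedAddMonoid G] {M : Set G}
    (hM : IsIntermediateMonoid M) : IsConvexSubgroupSet (M ∩ (-M)) := by
  obtain ⟨h0, hadd, hpos⟩ := hM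
  refine ⟨⟨h0, by simpa using h0⟩, ?_, ?_, ?_⟩
  · rintro x ⟨hx1, hx2⟩ y ⟨hy1, hy2⟩
    refine ⟨hadd _ hx1 _ hy1, ?_⟩
    simpa [neg_add, add_comm] using hadd _ hx2 _ hy2
  · rintro x ⟨hx1, hx2⟩
    exact ⟨hx2, by simpa using hx1⟩
  · rintro x h ⟨h1, h2⟩ hx0 hxh
    refine ⟨hpos hx0, ?_⟩
    have : -x = (h - x) + (-h) := by abel
    rw [Set.mem_neg, this]
    exact hadd _ (hpos (by simpa using hxh)) _ h2

lemma aux_left {G : Type*} [AddCommGroup G] [LinearOrder G] [IsOrderedAddMonoid G] (M : Set G)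
    (hM : IsIntermediateMonoid M) : {g : G | 0 ≤ g} ∪ (M ∩ (-M)) = M := by
  obtain ⟨h0, hadd, hpos⟩ := hM
  apply Set.Subset.antisymm
  · rintro x (hx | ⟨hx, _⟩)
    · exact hpos hx
    · exact hx
  · intro x hx
    rcases le_total 0 x with h | h
    · exact Or.inl h
    · exact Or.inr ⟨hx, by simpa using hpos (neg_nonneg.2 h)⟩

lemma aux_right {G : Type*} [AddCommGroup G] [LinearOrder G] [IsOrderedAddMonoid G] (H : Set G)
    (hH : IsConvexSubgroupSet H) :
    ({g : G | 0 ≤ g} ∪ H) ∩ (-({g : G | 0 ≤ g} ∪ H)) = H := by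
  obtain ⟨h0, hadd, hneg, hconv⟩ := hH
  apply Set.Subset.antisymm
  · rintro x ⟨hx1, hx2⟩
    rw [Set.mem_neg] at hx2
    rcases hx1 with hx1 | hx1
    · rcases hx2 with hx2 | hx2
      · have : x = 0 := le_antisymm (by simpa using hx2) hx1
        rw [this]; exact h0
      · simpa using hneg _ hx2
    · exact hx1
  · intro x hx
    exact ⟨Or.inr hx, by rw [Set.mem_neg]; exact Or.inr (hneg _ hx)⟩

lemma aux_inter {G : Type*} [AddCommGroup G] [LinearOrder G] [IsOrderedAddMonoid G] {H : Set G}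
    (hH : IsConvexSubgroupSet H) : IsIntermediateMonoid ({g : G | 0 ≤ g} ∪ H) := by
  obtain ⟨h0, hadd, hneg, hconv⟩ := hH
  refine ⟨Or.inr h0, ?_, Set.subset_union_left⟩
  have key : ∀ a, 0 ≤ a → ∀ b ∈ H, a + b ∈ {g : G | 0 ≤ g} ∪ H := by
    intro a ha b hb
    rcases le_total 0 (a + b) with h | h
    · exact Or.inl h
    · refine Or.inr ?_
      have : -(a + b) ∈ H := by
        refine hconv _ (-b) (hneg _ hb) (neg_nonneg.2 h)
          (by rw [show -(a + b) = -b - a by abel]; exact sub_le_self _ ha)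
      simpa using hneg _ this
  rintro a (ha | ha) b (hb | hb)
  · exact Or.inl (add_nonneg ha hb)
  · exact key a ha b hb
  · rw [add_comm]; exact key b hb a ha
  · exact Or.inr (hadd _ ha _ hb)

/-- The map `M ↦ M ∩ (−M)` is a bijection from intermediate monoids `G⁺ ⊆ M ⊆ G`
to convex subgroups of `G`, with inverse `H ↦ G⁺ ∪ H`. -/
theorem stmt_6 {G : Type*} [AddCommGroup G] [LinearOrder G] [IsOrderedAddMonoid G] :
    Set.BijOn (fun M : Set G => M ∩ (-M))
      {M : Set G | IsIntermediateMonoid M} {H : Set G | IsConvexSubgroupSet H} ∧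
    (∀ M : Set G, IsIntermediateMonoid M → {g : G | 0 ≤ g} ∪ (M ∩ (-M)) = M) ∧
    (∀ H : Set G, IsConvexSubgroupSet H →
      ({g : G | 0 ≤ g} ∪ H) ∩ (-({g : G | 0 ≤ g} ∪ H)) = H) := by
  refine ⟨⟨fun M hM => aux_maps hM, ?_, ?_⟩, fun M hM => aux_left M hM,
    fun H hH => aux_right H hH⟩
  · intro M hM M' hM' h
    have := aux_left M hM
    rw [← aux_left M hM, ← aux_left M' hM']
    simp only at h
    rw [h]
  · intro H hH
    exact ⟨{g : G | 0 ≤ g} ∪ H, aux_inter hH, aux_right H hH⟩
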